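/- Let θ ∈ {∪, ▷, ⊗}, let ≻ and ≻₀ be preference relations, and let r be an instance. Define ≻₁ = TC(≻₀ θ ≻), ≻₂ = (≻₁)|_r, ≻₃ = TC((≻₀ θ ≻)|_r), and ≻₄ = TC((≻₀|_r) θ (≻|_r)). Then ω_{≻₁}(r) = ω_{≻₂}(r) ⊆ ω_{≻₃}(r) = ω_{≻₄}(r). -/

import Mathlib

/-- Union composition of preference relations: `x (r0 ∪ r) y` iff `x r0 y ∨ x r y`. -/
def PrefUnion {α : Type*} (r0 r : α → α → Prop) : α → α → Prop :=
  fun x y => r0 x y ∨ r x y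

/-- Prioritized composition: `x (r0 ▷ r) y` iff `x r0 y ∨ (¬ y r0 x ∧ x r y)`. -/
def PrefPrior {α : Type*} (r0 r : α → α → Prop) : α → α → Prop :=
  fun x y => r0 x y ∨ (¬ r0 y x ∧ r x y)

/-- Pareto composition: `x (r0 ⊗ r) y` iff `(x r0 y ∧ ¬ y r x) ∨ (x r y ∧ ¬ y r0 x)`. -/
def PrefPareto {α : Type*} (r0 r : α → α → Prop) : α → α → Prop :=
  fun x y => (r0 x y ∧ ¬ r y x) ∨ (r x y ∧ ¬ r0 y x)

/-- `r` and `r0` are 0-compatible: no pair `(t1,t2)` with `t1 r0 t2` and `t2 r t1`. -/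
def Compat0 {α : Type*} (r r0 : α → α → Prop) : Prop :=
  ¬ ∃ t1 t2, r0 t1 t2 ∧ r t2 t1

/-- Strict partial order: irreflexive and transitive. -/
def IsSPO {α : Type*} (r : α → α → Prop) : Prop :=
  (∀ x, ¬ r x x) ∧ (∀ x y z, r x y → r y z → r x z)

/-- Weak order: a negatively transitive SPO. -/
def IsWO {α : Type*} (r : α → α → Prop) : Prop :=
  IsSPO r ∧ (∀ x y z, ¬ r x y → ¬ r y z → ¬ r x z)

/-- Interval order: an SPO such that `x r y ∧ z r w → x r w ∨ z r y`. -/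
def IsIO {α : Type*} (r : α → α → Prop) : Prop :=
  IsSPO r ∧ (∀ x y z w, r x y → r z w → r x w ∨ r z y)

/-- Transitive closure of a preference relation. -/
def PrefTC {α : Type*} (r : α → α → Prop) : α → α → Prop :=
  Relation.TransGen r

/-- The winnow operator: the most preferred tuples of `s` w.r.t. `r`. -/
def Winnow {α : Type*} (r : α → α → Prop) (s : Set α) : Set α :=
  {t ∈ s | ¬ ∃ t' ∈ s, r t' t}

/-- Restriction of a preference relation to an instance `s`. -/
def Restrict {α : Type*} (r : α → α → Prop) (s : Set α) : α → α → Prop :=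
  fun x y => r x y ∧ x ∈ s ∧ y ∈ s


lemma winnow_restrict {α : Type*} (q : α → α → Prop) (s : Set α) :
    Winnow q s = Winnow (Restrict q s) s := by
  ext t
  simp only [Winnow, Restrict, Set.mem_setOf_eq]
  constructor
  · rintro ⟨hts, hn⟩
    exact ⟨hts, fun ⟨t', h1, h2, _, _⟩ => hn ⟨t', h1, h2⟩⟩
  · rintro ⟨hts, hn⟩
    exact ⟨hts, fun ⟨t', h1, h2⟩ => hn ⟨t', h1, h2, h1, hts⟩⟩

lemma winnow_sub {α : Type*} (C : α → α → Prop) (s : Set α) :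
    Winnow (Restrict (PrefTC C) s) s ⊆ Winnow (PrefTC (Restrict C s)) s := by
  intro t ht
  obtain ⟨hts, hn⟩ := ht
  refine ⟨hts, fun ⟨t', ht's, htc⟩ => hn ⟨t', ht's, ?_⟩⟩
  exact ⟨Relation.TransGen.mono (r := Restrict C s) (p := C) (fun a b h => h.1) t' t htc, ht's, hts⟩

lemma union_restrict {α : Type*} (r r0 : α → α → Prop) (s : Set α) :
    Restrict (PrefUnion r0 r) s = PrefUnion (Restrict r0 s) (Restrict r s) := by
  funext x y; simp only [Restrict, PrefUnion, eq_iff_iff]; tauto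

lemma prior_restrict {α : Type*} (r r0 : α → α → Prop) (s : Set α) :
    Restrict (PrefPrior r0 r) s = PrefPrior (Restrict r0 s) (Restrict r s) := by
  funext x y; simp only [Restrict, PrefPrior, eq_iff_iff]; tauto

lemma pareto_restrict {α : Type*} (r r0 : α → α → Prop) (s : Set α) :
    Restrict (PrefPareto r0 r) s = PrefPareto (Restrict r0 s) (Restrict r s) := by
  funext x y; simp only [Restrict, PrefPareto, eq_iff_iff]; tauto

/-- For each composition operator θ: with `≻₁ = PrefTC(r0 θ r)`, `≻₂ = (≻₁)|_s`,
`≻₃ = PrefTC((r0 θ r)|_s)`, `≻₄ = PrefTC((r0|_s) θ (r|_s))`, we have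
`ω_{≻₁}(s) = ω_{≻₂}(s) ⊆ ω_{≻₃}(s) = ω_{≻₄}(s)`. -/
theorem stmt15 {α : Type*} (r r0 : α → α → Prop) (s : Set α) :
    (Winnow (PrefTC (PrefUnion r0 r)) s = Winnow (Restrict (PrefTC (PrefUnion r0 r)) s) s ∧
     Winnow (Restrict (PrefTC (PrefUnion r0 r)) s) s ⊆ Winnow (PrefTC (Restrict (PrefUnion r0 r) s)) s ∧
     Winnow (PrefTC (Restrict (PrefUnion r0 r) s)) s =
       Winnow (PrefTC (PrefUnion (Restrict r0 s) (Restrict r s))) s) ∧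
    (Winnow (PrefTC (PrefPrior r0 r)) s = Winnow (Restrict (PrefTC (PrefPrior r0 r)) s) s ∧
     Winnow (Restrict (PrefTC (PrefPrior r0 r)) s) s ⊆ Winnow (PrefTC (Restrict (PrefPrior r0 r) s)) s ∧
     Winnow (PrefTC (Restrict (PrefPrior r0 r) s)) s =
       Winnow (PrefTC (PrefPrior (Restrict r0 s) (Restrict r s))) s) ∧
    (Winnow (PrefTC (PrefPareto r0 r)) s = Winnow (Restrict (PrefTC (PrefPareto r0 r)) s) s ∧
     Winnow (Restrict (PrefTC (PrefPareto r0 r)) s) s ⊆ Winnow (PrefTC (Restrict (PrefPareto r0 r) s)) s ∧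
     Winnow (PrefTC (Restrict (PrefPareto r0 r) s)) s =
       Winnow (PrefTC (PrefPareto (Restrict r0 s) (Restrict r s))) s) := by
  refine ⟨⟨winnow_restrict _ s, winnow_sub _ s, by rw [union_restrict]⟩,
    ⟨winnow_restrict _ s, winnow_sub _ s, by rw [prior_restrict]⟩,
    ⟨winnow_restrict _ s, winnow_sub _ s, by rw [pareto_restrict]⟩⟩
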